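/- Let G be a finite simple graph and let S ⊆ V(G) be a set attaining the maximum of sun(G − S') − 2|S'| over all S' ⊆ V(G). Then for every subset S₁ ⊆ S, the number of connected components of G − S that contain a vertex adjacent in G to some vertex of S₁ is at least 2|S₁|. -/

import Mathlib

/-- `H` is (isomorphic to) a path on `n` vertices. -/
def IsPathOn {W : Type*} (H : SimpleGraph W) (n : ℕ) : Prop :=
  Nonempty (H ≃g SimpleGraph.pathGraph n)

/-- A graph is factor-critical if deleting any vertex leaves a graph with a perfect
matching. -/
def IsFactorCritical {W : Type*} (R : SimpleGraph W) : Prop :=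
  ∀ x : W, ∃ M : (R.induce {y : W | y ≠ x}).Subgraph, M.IsPerfectMatching

/-- `H` is a sun: `H = K₁`, `H = K₂`, or `H` is obtained from a factor-critical graph `R`
(its core, here an induced subgraph on a vertex set `R`) by attaching to each core vertex
`v` a pendant vertex `p v` whose unique neighbor is `v`. -/
def IsSun {W : Type*} (H : SimpleGraph W) : Prop :=
  Nat.card W = 1 ∨
  (Nat.card W = 2 ∧ ∀ u v : W, u ≠ v → H.Adj u v) ∨
  ∃ (R : Set W) (p : R ≃ (Rᶜ : Set W)),
    IsFactorCritical (H.induce R) ∧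
    (∀ v : R, H.Adj (↑v) (↑(p v))) ∧
    (∀ u : (Rᶜ : Set W), ∀ x : W, H.Adj (↑u) x ↔ x = ↑(p.symm u))

/-- The number of connected components of `G − S` that are suns. -/
noncomputable def sunCount {V : Type*} [Fintype V] (G : SimpleGraph V) (S : Set V) : ℕ :=
  Nat.card {c : (G.induce Sᶜ).ConnectedComponent //
    IsSun ((G.induce Sᶜ).induce c.supp)}

/-- `H` has a `{P₃, P₄, P₅}`-factor: a spanning subgraph each of whose components is a
path on 3, 4, or 5 vertices. -/
def HasPPPFactor {W : Type*} (H : SimpleGraph W) : Prop :=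
  ∃ F : SimpleGraph W, F ≤ H ∧ ∀ c : F.ConnectedComponent,
    IsPathOn (F.induce c.supp) 3 ∨ IsPathOn (F.induce c.supp) 4 ∨ IsPathOn (F.induce c.supp) 5

open SimpleGraph

section Aux

/-- Induced subgraphs along equal vertex sets are isomorphic. -/
def induceCongr {W : Type*} (G : SimpleGraph W) {A B : Set W} (h : A = B) :
    G.induce A ≃g G.induce B where
  toEquiv := Equiv.setCongr h
  map_rel_iff' := by intro a b; subst h; rfl

/-- Induced subgraph along the image of a set under a graph isomorphism. -/
def isoInduce {W W' : Type*} {H : SimpleGraph W} {H' : SimpleGraph W'}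
    (e : H ≃g H') (A : Set W) : H.induce A ≃g H'.induce (e '' A) where
  toEquiv := e.toEquiv.image A
  map_rel_iff' := by
    intro a b
    simp only [comap_adj, Function.Embedding.coe_subtype]
    exact e.map_rel_iff

lemma exists_pm_of_iso {W W' : Type*} {H : SimpleGraph W} {H' : SimpleGraph W'}
    (e : H ≃g H') (h : ∃ M : H.Subgraph, M.IsPerfectMatching) :
    ∃ M' : H'.Subgraph, M'.IsPerfectMatching := by
  obtain ⟨M, hM, hsp⟩ := h
  exact ⟨M.map e.toHom, hM.map e.toHom e.injective, fun v => ⟨e.symm v, hsp _, by simp⟩⟩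

lemma IsFactorCritical.of_iso {W W' : Type*} {H : SimpleGraph W} {H' : SimpleGraph W'}
    (e : H ≃g H') (h : IsFactorCritical H) : IsFactorCritical H' := by
  intro x
  have hset : (e '' {y | y ≠ e.symm x}) = {y : W' | y ≠ x} := by
    ext y
    simp only [Set.mem_image, Set.mem_setOf_eq]
    constructor
    · rintro ⟨z, hz, rfl⟩ hc
      exact hz (by rw [← hc]; simp)
    · intro hy
      exact ⟨e.symm y, fun hc => hy (by rw [← e.apply_symm_apply y, hc, e.apply_symm_apply]), by simp⟩
  exact exists_pm_of_iso ((isoInduce e _).trans (induceCongr H' hset)) (h (e.symm x))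

lemma IsSun.of_iso {W W' : Type*} {H : SimpleGraph W} {H' : SimpleGraph W'}
    (e : H ≃g H') (h : IsSun H) : IsSun H' := by
  rcases h with h1 | ⟨h2, hadj⟩ | ⟨R, p, hfc, hp, hu⟩
  · exact Or.inl (by rw [Nat.card_congr e.toEquiv.symm]; exact h1)
  · refine Or.inr (Or.inl ⟨by rw [Nat.card_congr e.toEquiv.symm]; exact h2, fun u v huv => ?_⟩)
    exact e.symm.map_rel_iff.mp (hadj _ _ (fun hc => huv (e.symm.injective hc)))
  · have hcompl : e.toEquiv '' (Rᶜ) = (e.toEquiv '' R)ᶜ := Set.image_compl_eq e.toEquiv.bijective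
    refine Or.inr (Or.inr ⟨e.toEquiv '' R,
      ((e.toEquiv.image R).symm.trans p).trans
        ((e.toEquiv.image Rᶜ).trans (Equiv.setCongr hcompl)), ?_, ?_, ?_⟩)
    · exact IsFactorCritical.of_iso (isoInduce e R) hfc
    · intro v
      have h1 := e.map_rel_iff.mpr (hp ((e.toEquiv.image R).symm v))
      simp only [Equiv.trans_apply, Equiv.setCongr_apply, Equiv.image_apply_coe]
      convert h1 using 2
      rw [Equiv.image_symm_apply_coe]
      exact (e.apply_symm_apply ↑v).symm
      rfl
    · intro u x
      have hu' : (e.symm u : W) ∈ (Rᶜ : Set W) := fun hmem => u.2 ⟨e.symm u, hmem, by simp⟩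
      have key := hu ⟨e.symm u, hu'⟩ (e.symm x)
      have hadj : H'.Adj (↑u) x ↔ H.Adj (e.symm ↑u) (e.symm x) := e.symm.map_rel_iff.symm
      have hcoe : (↑((((e.toEquiv.image R).symm.trans p).trans
          ((e.toEquiv.image Rᶜ).trans (Equiv.setCongr hcompl))).symm u) : W')
          = e ↑(p.symm ⟨e.symm ↑u, hu'⟩) := by
        rfl
      rw [hadj, key, hcoe]
      exact e.toEquiv.symm_apply_eq

/-- The isomorphism between an induced subgraph of an induced subgraph and the
corresponding induced subgraph of a larger induced subgraph. -/
def inclusionIso {V : Type*} (G : SimpleGraph V) {s t : Set V} (h : s ⊆ t) (A : Set ↥s) :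
    (G.induce s).induce A ≃g (G.induce t).induce (Set.inclusion h '' A) where
  toFun a := ⟨Set.inclusion h a.1, ⟨a.1, a.2, rfl⟩⟩
  invFun b := ⟨⟨b.1.1, by obtain ⟨x, _, he⟩ := b.2; rw [← he]; exact x.2⟩, by
    obtain ⟨x, hx, he⟩ := b.2
    have hxe : x = ⟨b.1.1, by obtain ⟨x', _, he'⟩ := b.2; rw [← he']; exact x'.2⟩ := by
      apply Subtype.ext
      have hval : (Set.inclusion h x : V) = ↑↑b := congrArg Subtype.val he
      exact hval
    exact hxe ▸ hx⟩
  left_inv a := by apply Subtype.ext; apply Subtype.ext; rfl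
  right_inv b := by apply Subtype.ext; apply Subtype.ext; rfl
  map_rel_iff' := Iff.rfl

end Aux

section Main

variable {V : Type*} [Fintype V] (G : SimpleGraph V) (S S₁ : Set V)

omit [Fintype V] in
lemma compl_subset_of_diff (_hS₁ : S₁ ⊆ S) : Sᶜ ⊆ (S \ S₁)ᶜ :=
  Set.compl_subset_compl.mpr Set.diff_subset

omit [Fintype V] in
/-- Key walk lemma: a walk in `G − (S \ S₁)` starting in the image of a component of
`G − S` that has no neighbor in `S₁` stays inside that image. -/
lemma walk_stays (hS₁ : S₁ ⊆ S) (c : (G.induce Sᶜ).ConnectedComponent)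
    (hna : ¬ ∃ v : ↥(Sᶜ), v ∈ c.supp ∧ ∃ s ∈ S₁, G.Adj (↑v) s)
    {u w : ↥((S \ S₁)ᶜ)} (p : (G.induce (S \ S₁)ᶜ).Walk u w)
    (hu : u ∈ Set.inclusion (compl_subset_of_diff S S₁ hS₁) '' c.supp) :
    w ∈ Set.inclusion (compl_subset_of_diff S S₁ hS₁) '' c.supp := by
  induction p with
  | nil => exact hu
  | @cons a b w' hab q ih =>
    apply ih
    obtain ⟨v, hv, rfl⟩ := hu
    have hGadj : G.Adj ↑v ↑b := hab
    by_cases hb : (b : V) ∈ Sᶜ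
    · refine ⟨⟨b, hb⟩, ?_, rfl⟩
      rw [SimpleGraph.ConnectedComponent.mem_supp_iff] at hv ⊢
      rw [← hv]
      exact SimpleGraph.ConnectedComponent.connectedComponentMk_eq_of_adj
        (by exact hGadj.symm : (G.induce Sᶜ).Adj ⟨↑b, hb⟩ v)
    · exfalso
      have hbS : (b : V) ∈ S := not_not.mp hb
      have hbS₁ : (b : V) ∈ S₁ := by
        by_contra h1
        exact b.2 ⟨hbS, h1⟩
      exact hna ⟨v, hv, ↑b, hbS₁, hGadj⟩

omit [Fintype V] in
lemma supp_map_eq (hS₁ : S₁ ⊆ S) (c : (G.induce Sᶜ).ConnectedComponent)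
    (hna : ¬ ∃ v : ↥(Sᶜ), v ∈ c.supp ∧ ∃ s ∈ S₁, G.Adj (↑v) s) :
    (c.map (G.induceHomOfLE (compl_subset_of_diff S S₁ hS₁)).toHom).supp
      = Set.inclusion (compl_subset_of_diff S S₁ hS₁) '' c.supp := by
  obtain ⟨v0, rfl⟩ := c.exists_rep
  ext w
  simp only [SimpleGraph.ConnectedComponent.mem_supp_iff, SimpleGraph.ConnectedComponent.map_mk]
  constructor
  · intro hw
    obtain ⟨p⟩ := (SimpleGraph.ConnectedComponent.exact hw).symm
    exact walk_stays G S S₁ hS₁ _ hna p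
      ⟨v0, rfl, rfl⟩
  · rintro ⟨v, hv, rfl⟩
    change (G.induce Sᶜ).connectedComponentMk v = (G.induce Sᶜ).connectedComponentMk v0 at hv
    have hr : (G.induce Sᶜ).Reachable v v0 := SimpleGraph.ConnectedComponent.exact hv
    exact SimpleGraph.ConnectedComponent.sound
      (hr.map (G.induceHomOfLE (compl_subset_of_diff S S₁ hS₁)).toHom)

end Main

theorem neighborhood_condition {V : Type*} [Fintype V] (G : SimpleGraph V) (S : Set V)
    (hmax : ∀ S' : Set V,
      (sunCount G S' : ℤ) - 2 * S'.ncard ≤ (sunCount G S : ℤ) - 2 * S.ncard)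
    (S₁ : Set V) (hS₁ : S₁ ⊆ S) :
    2 * S₁.ncard ≤ Nat.card {c : (G.induce Sᶜ).ConnectedComponent //
      ∃ v : ↥(Sᶜ), v ∈ c.supp ∧ ∃ s ∈ S₁, G.Adj (↑v) s} := by
  classical
  set S' : Set V := S \ S₁ with hS'
  have hsub : Sᶜ ⊆ S'ᶜ := compl_subset_of_diff S S₁ hS₁
  set φ := (G.induceHomOfLE hsub).toHom with hφ
  -- the three key subtype counts
  set Adjacent : (G.induce Sᶜ).ConnectedComponent → Prop :=
    fun c => ∃ v : ↥(Sᶜ), v ∈ c.supp ∧ ∃ s ∈ S₁, G.Adj (↑v) s with hAdjacent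
  -- map from non-adjacent sun components to sun components of G - S'
  have key : ∀ c : (G.induce Sᶜ).ConnectedComponent, ¬ Adjacent c →
      IsSun ((G.induce Sᶜ).induce c.supp) →
      IsSun ((G.induce S'ᶜ).induce (c.map φ).supp) := by
    intro c hna hsun
    have hsupp := supp_map_eq G S S₁ hS₁ c hna
    exact IsSun.of_iso ((inclusionIso G hsub c.supp).trans
      (induceCongr _ hsupp.symm)) hsun
  have hinj : ∀ c₁ c₂ : (G.induce Sᶜ).ConnectedComponent, ¬ Adjacent c₁ → ¬ Adjacent c₂ →
      c₁.map φ = c₂.map φ → c₁ = c₂ := by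
    intro c₁ c₂ h1 h2 he
    have := congrArg SimpleGraph.ConnectedComponent.supp he
    rw [supp_map_eq G S S₁ hS₁ c₁ h1, supp_map_eq G S S₁ hS₁ c₂ h2] at this
    have hsupp : c₁.supp = c₂.supp :=
      Set.image_injective.mpr (Set.inclusion_injective hsub) this
    exact SimpleGraph.ConnectedComponent.supp_injective hsupp
  -- counting
  have hcount1 : sunCount G S ≤
      Nat.card {c : (G.induce Sᶜ).ConnectedComponent // Adjacent c} +
      Nat.card {c : (G.induce Sᶜ).ConnectedComponent //
        IsSun ((G.induce Sᶜ).induce c.supp) ∧ ¬ Adjacent c} := by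
    rw [← Nat.card_sum]
    apply Nat.card_le_card_of_injective
      (f := fun c : {c : (G.induce Sᶜ).ConnectedComponent //
        IsSun ((G.induce Sᶜ).induce c.supp)} =>
        if h : Adjacent c.1 then Sum.inl ⟨c.1, h⟩ else Sum.inr ⟨c.1, c.2, h⟩)
    intro c₁ c₂ hc
    dsimp only at hc
    apply Subtype.ext
    by_cases h1 : Adjacent c₁.1 <;> by_cases h2 : Adjacent c₂.1
    · rw [dif_pos h1, dif_pos h2] at hc
      have h' := Sum.inl.inj hc
      exact Subtype.mk_eq_mk.mp h'
    · rw [dif_pos h1, dif_neg h2] at hc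
      exact absurd hc (by simp)
    · rw [dif_neg h1, dif_pos h2] at hc
      exact absurd hc (by simp)
    · rw [dif_neg h1, dif_neg h2] at hc
      have h' := Sum.inr.inj hc
      exact Subtype.mk_eq_mk.mp h'
  have hcount2 : Nat.card {c : (G.induce Sᶜ).ConnectedComponent //
        IsSun ((G.induce Sᶜ).induce c.supp) ∧ ¬ Adjacent c} ≤ sunCount G S' := by
    apply Nat.card_le_card_of_injective
      (f := fun c : {c : (G.induce Sᶜ).ConnectedComponent //
        IsSun ((G.induce Sᶜ).induce c.supp) ∧ ¬ Adjacent c} =>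
        (⟨c.1.map φ, key c.1 c.2.2 c.2.1⟩ : {c : (G.induce S'ᶜ).ConnectedComponent //
          IsSun ((G.induce S'ᶜ).induce c.supp)}))
    intro c₁ c₂ hc
    exact Subtype.ext (hinj c₁.1 c₂.1 c₁.2.2 c₂.2.2 (congrArg Subtype.val hc))
  -- arithmetic
  have hS₁le : S₁.ncard ≤ S.ncard := Set.ncard_le_ncard hS₁ S.toFinite
  have hdiff : S'.ncard = S.ncard - S₁.ncard := Set.ncard_diff hS₁
  have hmax' := hmax S'
  have h1 : (sunCount G S' : ℤ) + 2 * S₁.ncard ≤ (sunCount G S : ℤ) := by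
    rw [hdiff] at hmax'
    rw [Nat.cast_sub hS₁le] at hmax'
    linarith
  have h2 : (sunCount G S : ℤ) ≤
      (Nat.card {c : (G.induce Sᶜ).ConnectedComponent // Adjacent c} : ℤ) + sunCount G S' := by
    exact_mod_cast le_trans hcount1 (by omega)
  have : (2 * S₁.ncard : ℤ) ≤
      (Nat.card {c : (G.induce Sᶜ).ConnectedComponent // Adjacent c} : ℤ) := by linarith
  exact_mod_cast this
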